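/- Let n be a finite index type, Q : Matrix n n ℝ a positive semidefinite matrix, a, y : n → ℝ with Q *ᵥ y = a, and ε ≥ 0. Then ε · Real.sqrt (a ⬝ᵥ y) is the greatest element of the set { t : ℝ | ∃ x : n → ℝ, x ⬝ᵥ (Q *ᵥ x) ≤ ε² ∧ t = a ⬝ᵥ x }; i.e., the optimal value of the quadratically constrained linear program: maximize a ⬝ᵥ x subject to x ⬝ᵥ (Q *ᵥ x) ≤ ε², equals ε·√(aᵀy), and this value is attained. -/

import Mathlib

open Matrix

/-- The optimal value of the QCLP `max aᵀx s.t. xᵀQx ≤ ε²` equals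
`ε √(aᵀy)` for any preimage `y` of `a` under `Q`, and it is attained. -/
theorem qclp_optimal_value
    {n : Type*} [Fintype n]
    (Q : Matrix n n ℝ) (hQ : Q.PosSemidef) (a y : n → ℝ)
    (hy : Q *ᵥ y = a) (ε : ℝ) (hε : 0 ≤ ε) :
    IsGreatest {t : ℝ | ∃ x : n → ℝ, x ⬝ᵥ (Q *ᵥ x) ≤ ε ^ 2 ∧ t = a ⬝ᵥ x}
      (ε * Real.sqrt (a ⬝ᵥ y)) := by
  have hsymm : Qᵀ = Q := by simpa [Matrix.IsHermitian] using hQ.1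
  have hdot : ∀ u v : n → ℝ, u ⬝ᵥ (Q *ᵥ v) = (Q *ᵥ u) ⬝ᵥ v := by
    intro u v
    rw [dotProduct_mulVec, ← mulVec_transpose, hsymm]
  have hpos : ∀ v : n → ℝ, 0 ≤ v ⬝ᵥ (Q *ᵥ v) := fun v => by simpa using hQ.dotProduct_mulVec_nonneg v
  have hay : a ⬝ᵥ y = y ⬝ᵥ (Q *ᵥ y) := by
    rw [← hy, hdot]
  have hc : 0 ≤ a ⬝ᵥ y := hay ▸ hpos y
  -- Cauchy–Schwarz: (y ⬝ᵥ Q x)² ≤ (y Q y)(x Q x)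
  have hCS : ∀ x : n → ℝ,
      (y ⬝ᵥ (Q *ᵥ x)) ^ 2 ≤ (y ⬝ᵥ (Q *ᵥ y)) * (x ⬝ᵥ (Q *ᵥ x)) := by
    intro x
    have key : ∀ t : ℝ,
        0 ≤ (y ⬝ᵥ (Q *ᵥ y)) * (t * t) + (2 * (y ⬝ᵥ (Q *ᵥ x))) * t
          + x ⬝ᵥ (Q *ᵥ x) := by
      intro t
      have h0 := hpos (x + t • y)
      have : (x + t • y) ⬝ᵥ (Q *ᵥ (x + t • y)) =
          (y ⬝ᵥ (Q *ᵥ y)) * (t * t) + (2 * (y ⬝ᵥ (Q *ᵥ x))) * t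
            + x ⬝ᵥ (Q *ᵥ x) := by
        have h1 : x ⬝ᵥ (Q *ᵥ y) = y ⬝ᵥ (Q *ᵥ x) := by
          rw [hdot, dotProduct_comm]
        simp [mulVec_add, mulVec_smul, dotProduct_add, add_dotProduct,
          dotProduct_smul, smul_dotProduct, smul_eq_mul, h1]
        ring
      linarith [this ▸ h0]
    have := discrim_le_zero (a := y ⬝ᵥ (Q *ᵥ y)) (b := 2 * (y ⬝ᵥ (Q *ᵥ x))) (c := x ⬝ᵥ (Q *ᵥ x)) key
    rw [discrim] at this
    nlinarith
  constructor
  · -- membership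
    rcases eq_or_lt_of_le hc with hc0 | hc0
    · exact ⟨0, by simpa using sq_nonneg ε, by simp [← hc0]⟩
    · refine ⟨(ε / Real.sqrt (a ⬝ᵥ y)) • y, ?_, ?_⟩
      · have hs : Real.sqrt (a ⬝ᵥ y) > 0 := Real.sqrt_pos.mpr hc0
        have : ((ε / Real.sqrt (a ⬝ᵥ y)) • y) ⬝ᵥ
            (Q *ᵥ ((ε / Real.sqrt (a ⬝ᵥ y)) • y)) =
            (ε / Real.sqrt (a ⬝ᵥ y)) ^ 2 * (y ⬝ᵥ (Q *ᵥ y)) := by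
          simp [mulVec_smul, dotProduct_smul, smul_dotProduct, smul_eq_mul]
          ring
        rw [this, ← hay, div_pow, Real.sq_sqrt hc,
          div_mul_cancel₀ _ (ne_of_gt hc0)]
      · have hs : Real.sqrt (a ⬝ᵥ y) ≠ 0 := ne_of_gt (Real.sqrt_pos.mpr hc0)
        have hm : a ⬝ᵥ y = Real.sqrt (a ⬝ᵥ y) * Real.sqrt (a ⬝ᵥ y) :=
          (Real.mul_self_sqrt hc).symm
        rw [dotProduct_smul, smul_eq_mul]
        field_simp
        rw [Real.sq_sqrt hc]
  · -- upper bound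
    rintro t ⟨x, hx, rfl⟩
    have h1 : a ⬝ᵥ x = y ⬝ᵥ (Q *ᵥ x) := by rw [← hy, hdot]
    have h2 : (a ⬝ᵥ x) ^ 2 ≤ (a ⬝ᵥ y) * ε ^ 2 := by
      have := hCS x
      rw [← h1, ← hay] at this
      nlinarith [hpos x]
    calc a ⬝ᵥ x ≤ Real.sqrt ((a ⬝ᵥ x) ^ 2) := by
          rw [Real.sqrt_sq_eq_abs]; exact le_abs_self _
      _ ≤ Real.sqrt ((a ⬝ᵥ y) * ε ^ 2) := Real.sqrt_le_sqrt h2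
      _ = ε * Real.sqrt (a ⬝ᵥ y) := by
          rw [Real.sqrt_mul hc, Real.sqrt_sq hε, mul_comm]
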